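/- If M is an n×n doubly substochastic matrix, then the 2n×2n block matrix [[M, I − diag(M·1)], [I − diag(Mᵀ·1), Mᵀ]] is doubly stochastic, where 1 is the all-ones vector, diag(x) is the diagonal matrix with the entries of the vector x on its diagonal, and I is the n×n identity matrix. -/
import Mathlib


/-- A square real matrix is doubly substochastic if all entries are nonnegative and
every row sum and every column sum is at most 1. -/
def DoublySubstochastic {m : Type*} [Fintype m] (D : Matrix m m ℝ) : Prop :=
  (∀ i j, 0 ≤ D i j) ∧ (∀ i, ∑ j, D i j ≤ 1) ∧ (∀ j, ∑ i, D i j ≤ 1)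

/-- A square real matrix is doubly stochastic if all entries are nonnegative and
every row sum and every column sum equals 1. -/
def DoublyStochastic {m : Type*} [Fintype m] (D : Matrix m m ℝ) : Prop :=
  (∀ i j, 0 ≤ D i j) ∧ (∀ i, ∑ j, D i j = 1) ∧ (∀ j, ∑ i, D i j = 1)

/-- If `M` is an `n×n` doubly substochastic matrix, then the `2n×2n` block matrix
`[[M, I − diag(M·1)], [I − diag(Mᵀ·1), Mᵀ]]` is doubly stochastic. -/
theorem fromBlocks_doublyStochastic_of_doublySubstochastic {n : ℕ}
    (M : Matrix (Fin n) (Fin n) ℝ) (hM : DoublySubstochastic M) :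
    DoublyStochastic
      (Matrix.fromBlocks
        M (1 - Matrix.diagonal (M.mulVec (fun _ => 1)))
        (1 - Matrix.diagonal (M.transpose.mulVec (fun _ => 1))) M.transpose) := by
  obtain ⟨hnn, hrow, hcol⟩ := hM
  have hmv : ∀ i, M.mulVec (fun _ => 1) i = ∑ j, M i j := by
    intro i; simp [Matrix.mulVec, dotProduct]
  have hmvT : ∀ i, M.transpose.mulVec (fun _ => 1) i = ∑ j, M j i := by
    intro i; simp [Matrix.mulVec, dotProduct, Matrix.transpose]
  have hB : ∀ i j : Fin n, (1 - Matrix.diagonal (M.mulVec (fun _ => 1))) i j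
      = if i = j then 1 - ∑ k, M i k else 0 := by
    intro i j
    by_cases h : i = j <;>
      simp [Matrix.sub_apply, Matrix.one_apply, Matrix.diagonal_apply, h, hmv]
  have hC : ∀ i j : Fin n, (1 - Matrix.diagonal (M.transpose.mulVec (fun _ => 1))) i j
      = if i = j then 1 - ∑ k, M k i else 0 := by
    intro i j
    by_cases h : i = j <;>
      simp [Matrix.sub_apply, Matrix.one_apply, Matrix.diagonal_apply, h, hmvT]
  refine ⟨?_, ?_, ?_⟩
  · rintro (i | i) (j | j)
    · exact hnn i j
    · rw [Matrix.fromBlocks_apply₁₂, hB]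
      split
      · linarith [hrow i]
      · exact le_refl 0
    · rw [Matrix.fromBlocks_apply₂₁, hC]
      split
      · linarith [hcol i]
      · exact le_refl 0
    · exact hnn j i
  · rintro (i | i)
    · rw [Fintype.sum_sum_type]
      simp only [Matrix.fromBlocks_apply₁₁, Matrix.fromBlocks_apply₁₂]
      rw [Finset.sum_congr rfl (fun j _ => hB i j)]
      simp
    · rw [Fintype.sum_sum_type]
      simp only [Matrix.fromBlocks_apply₂₁, Matrix.fromBlocks_apply₂₂]
      rw [Finset.sum_congr rfl (fun j _ => hC i j)]
      simp [Matrix.transpose_apply]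
  · rintro (j | j)
    · rw [Fintype.sum_sum_type]
      simp only [Matrix.fromBlocks_apply₁₁, Matrix.fromBlocks_apply₂₁]
      simp only [hC]
      simp [Finset.sum_ite_eq]
    · rw [Fintype.sum_sum_type]
      simp only [Matrix.fromBlocks_apply₁₂, Matrix.fromBlocks_apply₂₂]
      simp only [hB]
      simp [Matrix.transpose_apply, Finset.sum_ite_eq]
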